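/- Fix an integer j₀ ≥ 2, let C = { Σ_{i∈F} ε_i e_i : F ⊂ ℕ finite, card F ≤ n_{j₀−1}, ε_i ∈ {−1,1} }, and let E be the smallest subset of c₀₀ containing C and closed under the operations: for every j ≥ 1 with j ≠ j₀ and every f_1 < f_2 < ⋯ < f_d in E with d ≤ 5·n_j, the element (1/m_j)(f_1 + ⋯ + f_d) belongs to E. Then for every h ∈ E, the set { k ∈ ℕ : |h(k)| > 1/m_{j₀}² } has cardinality strictly less than (5·n_{j₀−1})^{2·log₂ m_{j₀}} (note log₂ m_{j₀} = 5^{j₀−1}). -/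

import Mathlib

noncomputable section

/-- The sequence `m_j`: `m 1 = 2`, `m (j+1) = (m j)^5`, i.e. `m j = 2 ^ 5 ^ (j-1)`. -/
def mseq (j : ℕ) : ℕ := 2 ^ 5 ^ (j - 1)

/-- The sequence `n_j`: `n 1 = 4` and `n (j+1) = (5 n_j) ^ (3 · 5^j)`. -/
def nseq : ℕ → ℕ
  | 0 => 1
  | 1 => 4
  | (j + 2) => (5 * nseq (j + 1)) ^ (3 * 5 ^ (j + 1))

/-- `f < g` for finitely supported functions: every element of the support of `f` is
less than every element of the support of `g`. -/
def BlockLt (f g : ℕ →₀ ℝ) : Prop :=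
  ∀ a ∈ f.support, ∀ b ∈ g.support, a < b

/-- The action of `f ∈ c₀₀` on `x ∈ c₀₀`: `f(x) = ∑ k, f k * x k`. -/
def fapply (f x : ℕ →₀ ℝ) : ℝ := x.sum fun i v => f i * v

/-- The smallest subset `E` of `c₀₀` containing the set
`C = {∑_{i ∈ F} ±e_i : card F ≤ n_{j₀-1}}` and closed under the
`(𝓐_{5 n_j}, 1/m_j)` operations for all `j ≥ 1` with `j ≠ j₀`. -/
inductive Eset (j₀ : ℕ) : (ℕ →₀ ℝ) → Prop
  | base (h : ℕ →₀ ℝ) (hcard : h.support.card ≤ nseq (j₀ - 1))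
      (hval : ∀ k ∈ h.support, h k = 1 ∨ h k = -1) : Eset j₀ h
  | op (j d : ℕ) (hj : 1 ≤ j) (hne : j ≠ j₀) (hd : d ≤ 5 * nseq j) (f : Fin d → (ℕ →₀ ℝ))
      (hmem : ∀ i, Eset j₀ (f i))
      (hblock : ∀ i i' : Fin d, i < i' → BlockLt (f i) (f i')) :
      Eset j₀ ((mseq j : ℝ)⁻¹ • ∑ i, f i)

lemma nseq_pos : ∀ j, 1 ≤ nseq j
  | 0 => le_refl 1
  | 1 => by norm_num [nseq]
  | (j + 2) => by
      have h := nseq_pos (j + 1)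
      have : 0 < 5 * nseq (j + 1) := by omega
      exact Nat.one_le_pow _ _ this

lemma nseq_le_succ (j : ℕ) : nseq j ≤ nseq (j + 1) := by
  match j with
  | 0 => norm_num [nseq]
  | 1 =>
      show nseq 1 ≤ (5 * nseq 1) ^ (3 * 5 ^ 1)
      calc nseq 1 ≤ 5 * nseq 1 := by omega
        _ ≤ (5 * nseq 1) ^ (3 * 5 ^ 1) := Nat.le_self_pow (by norm_num) _
  | (j + 2) =>
      show nseq (j + 2) ≤ (5 * nseq (j + 2)) ^ (3 * 5 ^ (j + 2))
      calc nseq (j + 2) ≤ 5 * nseq (j + 2) := by omega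
        _ ≤ (5 * nseq (j + 2)) ^ (3 * 5 ^ (j + 2)) := Nat.le_self_pow (by positivity) _

lemma nseq_mono : Monotone nseq := monotone_nat_of_le_succ nseq_le_succ

lemma two_le_mseq (j : ℕ) : 2 ≤ mseq j := by
  have h1 : 1 ≤ 5 ^ (j - 1) := Nat.one_le_pow _ _ (by norm_num)
  calc (2 : ℕ) = 2 ^ 1 := by norm_num
    _ ≤ 2 ^ 5 ^ (j - 1) := Nat.pow_le_pow_right (by norm_num) h1

lemma mseq_real (j : ℕ) : (mseq j : ℝ) = 2 ^ 5 ^ (j - 1) := by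
  simp [mseq]

/-- Since blocks have pairwise disjoint supports, at each coordinate the sum is either
zero or equal to one of the summands. -/
lemma sum_apply_rep {d : ℕ} (f : Fin d → (ℕ →₀ ℝ))
    (hb : ∀ i i' : Fin d, i < i' → BlockLt (f i) (f i')) (k : ℕ) :
    (∑ i, f i) k = 0 ∨ ∃ i, (∑ i, f i) k = f i k := by
  have hsum : (∑ i, f i) k = ∑ i, f i k := Finsupp.finset_sum_apply _ _ _
  by_cases hz : ∀ i, f i k = 0
  · left; rw [hsum]; exact Finset.sum_eq_zero fun i _ => hz i
  · push_neg at hz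
    obtain ⟨i, hi⟩ := hz
    right
    refine ⟨i, ?_⟩
    rw [hsum]
    refine Finset.sum_eq_single i (fun i' _ hne => ?_) (by simp)
    by_contra h0
    rcases lt_or_gt_of_ne hne with hlt | hlt
    · exact lt_irrefl k
        (hb i' i hlt k (Finsupp.mem_support_iff.2 h0) k (Finsupp.mem_support_iff.2 hi))
    · exact lt_irrefl k
        (hb i i' hlt k (Finsupp.mem_support_iff.2 hi) k (Finsupp.mem_support_iff.2 h0))

lemma Eset_abs_le_one {j₀ : ℕ} {h : ℕ →₀ ℝ} (hh : Eset j₀ h) (k : ℕ) : |h k| ≤ 1 := by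
  induction hh with
  | base g hcard hval =>
      by_cases hk : g k = 0
      · simp [hk]
      · rcases hval k (Finsupp.mem_support_iff.2 hk) with h1 | h1 <;> simp [h1]
  | op j d hj hne hd f hmem hblock ih =>
      rw [Finsupp.smul_apply, smul_eq_mul, abs_mul]
      have hm : (2 : ℝ) ≤ (mseq j : ℝ) := by exact_mod_cast two_le_mseq j
      have hmpos : (0 : ℝ) < (mseq j : ℝ) := by linarith
      have hsum : |(∑ i, f i) k| ≤ 1 := by
        rcases sum_apply_rep f hblock k with h0 | ⟨i, hi⟩
        · simp [h0]
        · rw [hi]; exact ih i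
      calc |((mseq j : ℝ))⁻¹| * |(∑ i, f i) k| ≤ |((mseq j : ℝ))⁻¹| * 1 := by
              apply mul_le_mul_of_nonneg_left hsum (abs_nonneg _)
        _ = ((mseq j : ℝ))⁻¹ := by rw [mul_one, abs_of_pos (inv_pos.2 hmpos)]
        _ ≤ 1 := by
            rw [inv_le_one_iff₀]; right; linarith

/-- Key counting lemma: the number of coordinates where `|h k| > 2⁻ʳ` is at most
`n_{j₀-1} · (5 n_{j₀-1})^(r-1)`, for all `r ≤ 2 · 5^(j₀-1)`. -/
lemma key_count {j₀ : ℕ} (hj₀ : 2 ≤ j₀) {h : ℕ →₀ ℝ} (hh : Eset j₀ h) :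
    ∀ r : ℕ, r ≤ 2 * 5 ^ (j₀ - 1) →
      (h.support.filter (fun k => ((2 : ℝ) ^ r)⁻¹ < |h k|)).card
        ≤ nseq (j₀ - 1) * (5 * nseq (j₀ - 1)) ^ (r - 1) := by
  induction hh with
  | base g hcard hval =>
      intro r _
      calc (g.support.filter _).card ≤ g.support.card := Finset.card_filter_le _ _
        _ ≤ nseq (j₀ - 1) := hcard
        _ ≤ nseq (j₀ - 1) * (5 * nseq (j₀ - 1)) ^ (r - 1) :=
            Nat.le_mul_of_pos_right _ (Nat.pow_pos (by have := nseq_pos (j₀ - 1); omega))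
  | op j d hj hne hd f hmem hblock ih =>
      intro r hr
      set s := 5 ^ (j - 1) with hs
      have hs1 : 1 ≤ s := Nat.one_le_pow _ _ (by norm_num)
      have habs : ∀ k, |((mseq j : ℝ)⁻¹ • ∑ i, f i) k| ≤ ((2 : ℝ) ^ s)⁻¹ := by
        intro k
        rw [Finsupp.smul_apply, smul_eq_mul, abs_mul, mseq_real]
        have h2s : (0 : ℝ) < (2 : ℝ) ^ s := by positivity
        have hsum : |(∑ i, f i) k| ≤ 1 := by
          rcases sum_apply_rep f hblock k with h0 | ⟨i, hi⟩
          · simp [h0]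
          · rw [hi]; exact Eset_abs_le_one (hmem i) k
        calc |((2 : ℝ) ^ s)⁻¹| * |(∑ i, f i) k| ≤ |((2 : ℝ) ^ s)⁻¹| * 1 :=
              mul_le_mul_of_nonneg_left hsum (abs_nonneg _)
          _ = ((2 : ℝ) ^ s)⁻¹ := by rw [mul_one, abs_of_pos (inv_pos.2 h2s)]
      by_cases hrs : r ≤ s
      · -- the filtered set is empty
        have hempty : ∀ k ∈ ((mseq j : ℝ)⁻¹ • ∑ i, f i).support,
            ¬ ((2 : ℝ) ^ r)⁻¹ < |((mseq j : ℝ)⁻¹ • ∑ i, f i) k| := by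
          intro k _
          have h1 : ((2 : ℝ) ^ s)⁻¹ ≤ ((2 : ℝ) ^ r)⁻¹ := by
            apply inv_anti₀ (by positivity)
            exact pow_le_pow_right₀ (by norm_num) hrs
          exact not_lt.2 (le_trans (habs k) h1)
        rw [Finset.filter_false_of_mem hempty]
        simp
      · push_neg at hrs
        -- s < r, hence j ≤ j₀ - 1
        have hjlt : j ≤ j₀ - 1 := by
          have h1 : s < 5 ^ j₀ := by
            have : 2 * 5 ^ (j₀ - 1) < 5 * 5 ^ (j₀ - 1) := by
              have : 0 < 5 ^ (j₀ - 1) := Nat.pow_pos (show 0 < 5 by norm_num)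
              omega
            have h5 : 5 * 5 ^ (j₀ - 1) = 5 ^ j₀ := by
              rw [← pow_succ']
              congr 1
              omega
            omega
          have h2 : j - 1 < j₀ := by
            by_contra hc
            push_neg at hc
            have : (5 : ℕ) ^ j₀ ≤ 5 ^ (j - 1) := Nat.pow_le_pow_right (by norm_num) hc
            omega
          omega
        have hnj : nseq j ≤ nseq (j₀ - 1) := nseq_mono hjlt
        -- inclusion into a union
        have hsub : (((mseq j : ℝ)⁻¹ • ∑ i, f i).support.filter
              (fun k => ((2 : ℝ) ^ r)⁻¹ < |((mseq j : ℝ)⁻¹ • ∑ i, f i) k|)) ⊆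
            Finset.univ.biUnion (fun i : Fin d =>
              (f i).support.filter (fun k => ((2 : ℝ) ^ (r - s))⁻¹ < |f i k|)) := by
          intro k hk
          rw [Finset.mem_filter] at hk
          obtain ⟨hksupp, hklt⟩ := hk
          have hk0 : ((mseq j : ℝ)⁻¹ • ∑ i, f i) k ≠ 0 := Finsupp.mem_support_iff.1 hksupp
          have hrep : ∃ i, (∑ i, f i) k = f i k := by
            rcases sum_apply_rep f hblock k with h0 | hi
            · exfalso
              apply hk0
              rw [Finsupp.smul_apply, h0, smul_zero]
            · exact hi
          obtain ⟨i, hi⟩ := hrep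
          rw [Finset.mem_biUnion]
          refine ⟨i, Finset.mem_univ i, ?_⟩
          rw [Finset.mem_filter]
          have hval : ((mseq j : ℝ)⁻¹ • ∑ i, f i) k = ((2 : ℝ) ^ s)⁻¹ * f i k := by
            rw [Finsupp.smul_apply, smul_eq_mul, hi, mseq_real]
          have h2s : (0 : ℝ) < (2 : ℝ) ^ s := by positivity
          have hfik : ((2 : ℝ) ^ (r - s))⁻¹ < |f i k| := by
            have h1 : ((2 : ℝ) ^ r)⁻¹ < ((2 : ℝ) ^ s)⁻¹ * |f i k| := by
              rw [hval, abs_mul, abs_of_pos (inv_pos.2 h2s)] at hklt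
              exact hklt
            have hpow : (2 : ℝ) ^ r = 2 ^ (r - s) * 2 ^ s := by
              rw [← pow_add]
              congr 1
              omega
            rw [hpow, mul_inv] at h1
            have h2rs : (0 : ℝ) < ((2 : ℝ) ^ (r - s))⁻¹ := by positivity
            calc ((2 : ℝ) ^ (r - s))⁻¹
                = (((2 : ℝ) ^ (r - s))⁻¹ * ((2 : ℝ) ^ s)⁻¹) * (2 : ℝ) ^ s := by
                  field_simp
              _ < (((2 : ℝ) ^ s)⁻¹ * |f i k|) * (2 : ℝ) ^ s := by
                  apply mul_lt_mul_of_pos_right h1 h2s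
              _ = |f i k| := by field_simp
          refine ⟨Finsupp.mem_support_iff.2 ?_, hfik⟩
          intro h0
          rw [h0, abs_zero] at hfik
          have : (0 : ℝ) < ((2 : ℝ) ^ (r - s))⁻¹ := by positivity
          linarith
        -- the counting
        have hrs1 : 1 ≤ r - s := by omega
        have hrsle : r - s ≤ 2 * 5 ^ (j₀ - 1) := by omega
        set N := nseq (j₀ - 1) with hN
        set B := 5 * nseq (j₀ - 1) with hB
        have hNpos : 1 ≤ N := nseq_pos _
        calc (((mseq j : ℝ)⁻¹ • ∑ i, f i).support.filter _).card
            ≤ (Finset.univ.biUnion (fun i : Fin d =>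
                (f i).support.filter (fun k => ((2 : ℝ) ^ (r - s))⁻¹ < |f i k|))).card :=
              Finset.card_le_card hsub
          _ ≤ ∑ i : Fin d, ((f i).support.filter
                (fun k => ((2 : ℝ) ^ (r - s))⁻¹ < |f i k|)).card :=
              Finset.card_biUnion_le
          _ ≤ ∑ _i : Fin d, N * B ^ (r - s - 1) :=
              Finset.sum_le_sum (fun i _ => ih i (r - s) hrsle)
          _ = d * (N * B ^ (r - s - 1)) := by
              rw [Finset.sum_const, Finset.card_univ, Fintype.card_fin, smul_eq_mul]
          _ ≤ B * (N * B ^ (r - s - 1)) := by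
              apply Nat.mul_le_mul_right
              calc d ≤ 5 * nseq j := hd
                _ ≤ B := by rw [hB]; omega
          _ = N * B ^ (r - s) := by
              have : B ^ (r - s) = B ^ (r - s - 1) * B := by
                rw [← pow_succ]
                congr 1
                omega
              rw [this]; ring
          _ ≤ N * B ^ (r - 1) := by
              apply Nat.mul_le_mul_left
              apply Nat.pow_le_pow_right (by omega)
              omega

/-- For every `h ∈ E` (the saturation avoiding the weight `m_{j₀}`),
the set `{k : |h(k)| > 1/m_{j₀}²}` has cardinality strictly less than
`(5 n_{j₀-1}) ^ (2 · log₂ m_{j₀})`, where `log₂ m_{j₀} = 5 ^ (j₀ - 1)`. -/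
theorem statement18 (j₀ : ℕ) (hj₀ : 2 ≤ j₀) (h : ℕ →₀ ℝ) (hh : Eset j₀ h) :
    ({k : ℕ | (1 : ℝ) / ((mseq j₀ : ℝ)) ^ 2 < |h k|}).Finite ∧
    ({k : ℕ | (1 : ℝ) / ((mseq j₀ : ℝ)) ^ 2 < |h k|}).ncard
      < (5 * nseq (j₀ - 1)) ^ (2 * 5 ^ (j₀ - 1)) := by
  set L := 2 * 5 ^ (j₀ - 1) with hL
  have hL1 : 1 ≤ L := by
    have : 0 < 5 ^ (j₀ - 1) := Nat.pow_pos (show 0 < 5 by norm_num)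
    omega
  have hmsq : (1 : ℝ) / ((mseq j₀ : ℝ)) ^ 2 = ((2 : ℝ) ^ L)⁻¹ := by
    rw [mseq_real, one_div, ← pow_mul, hL]
    ring_nf
  have hset : {k : ℕ | (1 : ℝ) / ((mseq j₀ : ℝ)) ^ 2 < |h k|} =
      ↑(h.support.filter (fun k => ((2 : ℝ) ^ L)⁻¹ < |h k|)) := by
    ext k
    simp only [Set.mem_setOf_eq, Finset.coe_filter, Finsupp.mem_support_iff, hmsq,
      Set.mem_setOf_eq]
    constructor
    · intro hk
      refine ⟨?_, hk⟩
      intro h0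
      rw [h0, abs_zero] at hk
      have : (0 : ℝ) < ((2 : ℝ) ^ L)⁻¹ := by positivity
      linarith
    · exact fun hk => hk.2
  rw [hset]
  refine ⟨Finset.finite_toSet _, ?_⟩
  rw [Set.ncard_coe_finset]
  have hcount := key_count hj₀ hh L (le_refl L)
  set N := nseq (j₀ - 1) with hN
  set B := 5 * nseq (j₀ - 1) with hB
  have hNpos : 1 ≤ N := nseq_pos _
  have hBpow : N * B ^ (L - 1) < B ^ L := by
    have h1 : N * B ^ (L - 1) < B * B ^ (L - 1) := by
      exact Nat.mul_lt_mul_of_lt_of_le (by omega) (le_refl _) (Nat.pow_pos (by omega))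
    have h2 : B * B ^ (L - 1) = B ^ L := by
      rw [← pow_succ']
      congr 1
      omega
    omega
  omega
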